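/- Let a ≤ b be integers. There exists an integer l ≥ 0 depending only on b−a such that: for every commutative ring R, every π ∈ R, and all cochain complexes M^• and N^• of R-modules vanishing in degrees > b which are isomorphic in the derived category D(R), if M^• is π-[a,b]-pseudo-coherent then N^• is π^l-[a,b]-pseudo-coherent. -/

import Mathlib

open CategoryTheory

section PseudoCoherence

variable {R : Type*} [CommRing R]

/-- A linear map (in `ModuleCat R`) is a `π`-isomorphism if its kernel and cokernel are
annihilated by `π`. -/
def IsPiIsomorphism (π : R) {M N : ModuleCat R} (f : M ⟶ N) : Prop :=
  (∀ x : M, f x = 0 → π • x = 0) ∧ (∀ y : N, ∃ x : M, π • y = f x)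

/-- A linear map (in `ModuleCat R`) is `π`-surjective if its cokernel is annihilated by `π`. -/
def IsPiSurjective (π : R) {M N : ModuleCat R} (f : M ⟶ N) : Prop :=
  ∀ y : N, ∃ x : M, π • y = f x

/-- A morphism of cochain complexes of `R`-modules `f : P^• ⟶ M^•` is a `π`-`[a,b]`-pseudo
resolution if `P^•` is a complex of finite free `R`-modules vanishing outside `[a,b]`, and
`H^i(f)` is a `π`-isomorphism for `i > a` and `π`-surjective for `i = a`. -/
def IsPiPseudoResolution (π : R) (a b : ℤ) {P M : CochainComplex (ModuleCat R) ℤ}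
    (f : P ⟶ M) : Prop :=
  (∀ i : ℤ, Module.Free R (P.X i)) ∧ (∀ i : ℤ, Module.Finite R (P.X i)) ∧
  (∀ i : ℤ, i < a ∨ b < i → ∀ x : P.X i, x = 0) ∧
  (∀ i : ℤ, a < i → IsPiIsomorphism π (HomologicalComplex.homologyMap f i)) ∧
  IsPiSurjective π (HomologicalComplex.homologyMap f a)

/-- A cochain complex of `R`-modules is `π`-`[a,b]`-pseudo-coherent if it vanishes in degrees
`> b` and admits a `π`-`[a,b]`-pseudo resolution. -/
def IsPiPseudoCoherent (π : R) (a b : ℤ) (M : CochainComplex (ModuleCat R) ℤ) : Prop :=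
  (∀ i : ℤ, b < i → ∀ x : M.X i, x = 0) ∧
  ∃ (P : CochainComplex (ModuleCat R) ℤ) (f : P ⟶ M), IsPiPseudoResolution π a b f

end PseudoCoherence

open CategoryTheory.Limits

namespace PropAux

variable {R : Type*} [CommRing R]

lemma happ {M N : ModuleCat R} {f g : M ⟶ N} (h : f = g) (x : M) : f x = g x :=
  by rw [h]

lemma exists_preimage_of_kernel {A B C : ModuleCat R} (i : A ⟶ B) (g : B ⟶ C)
    (w : i ≫ g = 0) (h : IsLimit (KernelFork.ofι i w)) (x : B) (hx : g x = 0) :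
    ∃ a : A, i a = x := by
  let e := h.conePointUniqueUpToIso (ModuleCat.kernelIsLimit g)
  have he : e.hom ≫ ModuleCat.ofHom (LinearMap.ker g.hom).subtype = i := by
    have := h.conePointUniqueUpToIso_hom_comp (ModuleCat.kernelIsLimit g)
      WalkingParallelPair.zero
    exact this
  refine ⟨e.inv ⟨x, hx⟩, ?_⟩
  have h3 : e.hom (e.inv ⟨x, hx⟩) = ⟨x, hx⟩ := happ e.inv_hom_id ⟨x, hx⟩
  calc i (e.inv ⟨x, hx⟩)
      = (LinearMap.ker g.hom).subtype (e.hom (e.inv ⟨x, hx⟩)) := (happ he _).symm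
    _ = x := by rw [h3]; rfl

lemma exists_preimage_of_cokernel {A B C : ModuleCat R} (f : A ⟶ B) (p : B ⟶ C)
    (w : f ≫ p = 0) (h : IsColimit (CokernelCofork.ofπ p w)) (x : B) (hx : p x = 0) :
    ∃ a : A, f a = x := by
  let e := h.coconePointUniqueUpToIso (ModuleCat.cokernelIsColimit f)
  have he : p ≫ e.hom = ModuleCat.ofHom (LinearMap.range f.hom).mkQ := by
    have := h.comp_coconePointUniqueUpToIso_hom (ModuleCat.cokernelIsColimit f)
      WalkingParallelPair.one
    exact this
  have : (ModuleCat.ofHom (LinearMap.range f.hom).mkQ) x = 0 := by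
    rw [← he]; show e.hom (p x) = 0; rw [hx, map_zero]
  change (LinearMap.range f.hom).mkQ x = 0 at this
  rw [Submodule.mkQ_apply, Submodule.Quotient.mk_eq_zero] at this
  exact this

section Interface

open HomologicalComplex

variable (K L : CochainComplex (ModuleCat R) ℤ)

lemma d_iCycles_apply (n : ℤ) (c : K.cycles n) : K.d n (n + 1) (K.iCycles n c) = 0 := by
  exact (happ (K.iCycles_d n (n + 1)) c).trans rfl

lemma exists_cycleRep (n : ℤ) (x : K.X n) (hx : K.d n (n + 1) x = 0) :
    ∃ c : K.cycles n, K.iCycles n c = x :=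
  exists_preimage_of_kernel _ _ (K.iCycles_d n (n + 1))
    (K.cyclesIsKernel n (n + 1) (by simp)) x hx

lemma homologyπ_surj (n : ℤ) : Function.Surjective (K.homologyπ n) :=
  (ModuleCat.epi_iff_surjective _).1 inferInstance

lemma iCycles_inj (n : ℤ) : Function.Injective (K.iCycles n) :=
  (ModuleCat.mono_iff_injective _).1 inferInstance

lemma toCycles_apply (p n : ℤ) (hpn : p + 1 = n) (y : K.X p) :
    K.iCycles n (K.toCycles p n y) = K.d p n y :=
  happ (K.toCycles_i p n) y

lemma homologyπ_eq_zero_iff (p n : ℤ) (hpn : p + 1 = n) (c : K.cycles n) :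
    K.homologyπ n c = 0 ↔ ∃ y : K.X p, K.toCycles p n y = c := by
  constructor
  · intro hc
    exact exists_preimage_of_cokernel (K.toCycles p n) (K.homologyπ n)
      (K.toCycles_comp_homologyπ p n)
      (K.homologyIsCokernel p n (by rw [CochainComplex.prev]; omega)) c hc
  · rintro ⟨y, rfl⟩
    exact (happ (K.toCycles_comp_homologyπ p n) y).trans rfl

variable {K L}

lemma homologyMap_π_apply (f : K ⟶ L) (n : ℤ) (c : K.cycles n) :
    homologyMap f n (K.homologyπ n c) = L.homologyπ n (cyclesMap f n c) :=
  happ (homologyπ_naturality f n) c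

lemma iCycles_cyclesMap_apply (f : K ⟶ L) (n : ℤ) (c : K.cycles n) :
    L.iCycles n (cyclesMap f n c) = f.f n (K.iCycles n c) :=
  happ (cyclesMap_i f n) c

lemma d_apply_comm (f : K ⟶ L) (i j : ℤ) (x : K.X i) :
    L.d i j (f.f i x) = f.f j (K.d i j x) :=
  happ (f.comm i j) x

/-- Lift boundaries along a quasi-isomorphism. -/
lemma qis_lift_boundary (s : K ⟶ L) [QuasiIso s] (p n : ℤ) (hpn : p + 1 = n)
    (z : K.X n) (hz : K.d n (n + 1) z = 0) (m : L.X p) (hm : L.d p n m = s.f n z) :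
    ∃ k : K.X p, K.d p n k = z := by
  have hiso : IsIso (homologyMap s n) := by
    rw [← quasiIsoAt_iff_isIso_homologyMap]; infer_instance
  obtain ⟨c, hc⟩ := exists_cycleRep K n z hz
  have h1 : cyclesMap s n c = L.toCycles p n m := by
    apply iCycles_inj L n
    rw [iCycles_cyclesMap_apply, hc, toCycles_apply L p n hpn, hm]
  have h2 : homologyMap s n (K.homologyπ n c) = 0 := by
    rw [homologyMap_π_apply, h1]
    exact (happ (L.toCycles_comp_homologyπ p n) m).trans rfl
  have h3 : K.homologyπ n c = 0 := by
    have hinj : Function.Injective (homologyMap s n) :=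
      (ModuleCat.mono_iff_injective _).1 inferInstance
    apply hinj
    rw [h2, map_zero]
  obtain ⟨y, hy⟩ := (homologyπ_eq_zero_iff K p n hpn c).1 h3
  exact ⟨y, by rw [← hc, ← hy, toCycles_apply K p n hpn]⟩

/-- Lift cycles (up to boundary) along a quasi-isomorphism. -/
lemma qis_lift_cycle (s : K ⟶ L) [QuasiIso s] (p n : ℤ) (hpn : p + 1 = n)
    (w : L.X n) (hw : L.d n (n + 1) w = 0) :
    ∃ z : K.X n, K.d n (n + 1) z = 0 ∧ ∃ m : L.X p, s.f n z = w + L.d p n m := by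
  have hiso : IsIso (homologyMap s n) := by
    rw [← quasiIsoAt_iff_isIso_homologyMap]; infer_instance
  obtain ⟨cw, hcw⟩ := exists_cycleRep L n w hw
  have hsurj : Function.Surjective (homologyMap s n) :=
    (ModuleCat.epi_iff_surjective _).1 inferInstance
  obtain ⟨hK, hhK⟩ := hsurj (L.homologyπ n cw)
  obtain ⟨cK, rfl⟩ := homologyπ_surj K n hK
  rw [homologyMap_π_apply] at hhK
  have h0 : L.homologyπ n (cyclesMap s n cK - cw) = 0 := by
    rw [map_sub, hhK, sub_self]
  obtain ⟨y, hy⟩ := (homologyπ_eq_zero_iff L p n hpn _).1 h0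
  refine ⟨K.iCycles n cK, d_iCycles_apply K n cK, y, ?_⟩
  have := congrArg (L.iCycles n) hy
  rw [map_sub, toCycles_apply L p n hpn, iCycles_cyclesMap_apply, hcw] at this
  -- this : L.d p n y = s.f n (K.iCycles n cK) - w
  rw [this]; abel

end Interface

section Lift

open HomologicalComplex

variable {P K M : CochainComplex (ModuleCat R) ℤ}

lemma XIso_d_apply (M : CochainComplex (ModuleCat R) ℤ) {p q : ℤ} (hpq : p = q) (r : ℤ)
    (y : M.X p) : M.d q r ((M.XIsoOfEq hpq).hom y) = M.d p r y := by
  subst hpq; rfl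

/-- chain map condition in degree `i` -/
def C1 (g : ∀ i : ℤ, P.X i ⟶ K.X i) (i : ℤ) : Prop :=
  ∀ x : P.X i, K.d i (i + 1) (g i x) = g (i + 1) (P.d i (i + 1) x)

/-- homotopy condition in degree `i` -/
def C2 (s : K ⟶ M) (f : P ⟶ M) (g : ∀ i : ℤ, P.X i ⟶ K.X i)
    (h : ∀ i : ℤ, P.X i ⟶ M.X (i - 1)) (i : ℤ) : Prop :=
  ∀ x : P.X i, f.f i x = s.f i (g i x) + M.d (i - 1) i (h i x) +
    (M.XIsoOfEq (add_sub_cancel_right i 1)).hom (h (i + 1) (P.d i (i + 1) x))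

lemma exists_chain_lift (s : K ⟶ M) [QuasiIso s] (f : P ⟶ M) (b : ℤ)
    (hPb : ∀ i : ℤ, b < i → ∀ x : P.X i, x = 0)
    (hfree : ∀ i : ℤ, Module.Free R (P.X i)) :
    ∀ n : ℕ, ∃ (g : ∀ i : ℤ, P.X i ⟶ K.X i) (h : ∀ i : ℤ, P.X i ⟶ M.X (i - 1)),
      (∀ i : ℤ, b + 1 - n ≤ i → C1 g i) ∧ (∀ i : ℤ, b + 1 - n ≤ i → C2 s f g h i) := by
  intro n
  induction n with
  | zero =>
    refine ⟨fun _ => 0, fun _ => 0, fun i hi x => ?_, fun i hi x => ?_⟩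
    · rw [hPb i (by omega) x]; simp
    · rw [hPb i (by omega) x]; simp
  | succ n ih =>
    obtain ⟨g, h, hg, hh⟩ := ih
    set t : ℤ := b - n with ht
    have hthr : b + 1 - ((n : ℤ) + 1) = t := by omega
    have h1 : t + 1 - 1 = t := add_sub_cancel_right t 1
    -- the auxiliary map `u x = f x - (cast) (h (t+1) (d x))` and its key property
    have key : ∀ x : P.X t,
        M.d t (t + 1) (f.f t x - (M.XIsoOfEq h1).hom (h (t + 1) (P.d t (t + 1) x))) =
          s.f (t + 1) (g (t + 1) (P.d t (t + 1) x)) := by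
      intro x
      have hdd : P.d (t + 1) (t + 1 + 1) (P.d t (t + 1) x) = 0 :=
        (happ (P.d_comp_d t (t + 1) (t + 1 + 1)) x).trans rfl
      have hC2 := hh (t + 1) (by omega) (P.d t (t + 1) x)
      rw [map_sub, d_apply_comm f t (t + 1) x, hC2, XIso_d_apply M h1 (t + 1), hdd,
        map_zero, map_zero, add_zero]
      abel
    have hfr := hfree t
    let B := Module.Free.chooseBasis R (P.X t)
    have exch : ∀ e, ∃ (k : K.X t) (m : M.X (t - 1)),
        K.d t (t + 1) k = g (t + 1) (P.d t (t + 1) (B e)) ∧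
        s.f t k + M.d (t - 1) t m +
          (M.XIsoOfEq h1).hom (h (t + 1) (P.d t (t + 1) (B e))) = f.f t (B e) := by
      intro e
      set x := B e with hx
      set u : M.X t := f.f t x - (M.XIsoOfEq h1).hom (h (t + 1) (P.d t (t + 1) x)) with hu
      set z : K.X (t + 1) := g (t + 1) (P.d t (t + 1) x) with hz
      have hzc : K.d (t + 1) (t + 1 + 1) z = 0 := by
        have hdd : P.d (t + 1) (t + 1 + 1) (P.d t (t + 1) x) = 0 :=
          (happ (P.d_comp_d t (t + 1) (t + 1 + 1)) x).trans rfl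
        rw [hz, hg (t + 1) (by omega) (P.d t (t + 1) x), hdd, map_zero]
      obtain ⟨k₀, hk₀⟩ := qis_lift_boundary s t (t + 1) rfl z hzc u (key x)
      have hw : M.d t (t + 1) (s.f t k₀ - u) = 0 := by
        rw [map_sub, d_apply_comm s t (t + 1) k₀, hk₀, key x, ← hz, sub_self]
      obtain ⟨zc, hzc', m, hm⟩ := qis_lift_cycle s (t - 1) t (by omega) _ hw
      refine ⟨k₀ - zc, m, ?_, ?_⟩
      · rw [map_sub, hk₀, hzc', sub_zero, hz]
      · rw [map_sub, hm]
        rw [hu]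
        abel
    choose kc mc hkm using exch
    let newg : P.X t ⟶ K.X t := ModuleCat.ofHom (B.constr R kc)
    let newh : P.X t ⟶ M.X (t - 1) := ModuleCat.ofHom (B.constr R mc)
    refine ⟨Function.update g t newg, Function.update h t newh, fun i hi => ?_, fun i hi => ?_⟩
    · replace hi : t ≤ i := by push_cast at hi; omega
      rcases eq_or_lt_of_le hi with hit | hit
      · -- t = t
        subst hit
        have e1 : Function.update g t newg t = newg := Function.update_self _ _ _
        have e2 : Function.update g t newg (t + 1) = g (t + 1) :=
          Function.update_of_ne (by omega) _ _
        intro x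
        rw [e1, e2]
        have heq : LinearMap.comp (K.d t (t + 1)).hom newg.hom =
            LinearMap.comp (g (t + 1)).hom
              (P.d t (t + 1)).hom := by
          apply Module.Basis.ext B
          intro e
          have hb : newg (B e) = kc e := Module.Basis.constr_basis B R kc e
          show K.d t (t + 1) (newg (B e)) = g (t + 1) (P.d t (t + 1) (B e))
          rw [hb]
          exact (hkm e).1
        exact LinearMap.congr_fun heq x
      · -- i > t
        have e1 : Function.update g t newg i = g i := Function.update_of_ne (by omega) _ _
        have e2 : Function.update g t newg (i + 1) = g (i + 1) :=
          Function.update_of_ne (by omega) _ _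
        intro x
        rw [e1, e2]
        exact hg i (by omega) x
    · replace hi : t ≤ i := by push_cast at hi; omega
      rcases eq_or_lt_of_le hi with hit | hit
      · subst hit
        have e1 : Function.update g t newg t = newg := Function.update_self _ _ _
        have e2 : Function.update h t newh t = newh := Function.update_self _ _ _
        have e3 : Function.update h t newh (t + 1) = h (t + 1) :=
          Function.update_of_ne (by omega) _ _
        intro x
        rw [e1, e2, e3]
        have heq : (f.f t).hom =
            LinearMap.comp (s.f t).hom newg.hom +
            LinearMap.comp (M.d (t - 1) t).hom newh.hom +
            LinearMap.comp (M.XIsoOfEq (add_sub_cancel_right t 1)).hom.hom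
              (LinearMap.comp (h (t + 1)).hom
                (P.d t (t + 1)).hom) := by
          apply Module.Basis.ext B
          intro e
          have hb : newg (B e) = kc e := Module.Basis.constr_basis B R kc e
          have hb' : newh (B e) = mc e := Module.Basis.constr_basis B R mc e
          show f.f t (B e) = s.f t (newg (B e)) + M.d (t - 1) t (newh (B e)) +
            (M.XIsoOfEq (add_sub_cancel_right t 1)).hom (h (t + 1) (P.d t (t + 1) (B e)))
          rw [hb, hb']
          exact ((hkm e).2).symm
        exact LinearMap.congr_fun heq x
      · have e1 : Function.update g t newg i = g i := Function.update_of_ne (by omega) _ _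
        have e2 : Function.update h t newh i = h i := Function.update_of_ne (by omega) _ _
        have e3 : Function.update h t newh (i + 1) = h (i + 1) :=
          Function.update_of_ne (by omega) _ _
        intro x
        rw [e1, e2, e3]
        exact hh i (by omega) x

end Lift

section Assemble

open HomologicalComplex

variable {P K M : CochainComplex (ModuleCat R) ℤ}

lemma exists_full_lift (s : K ⟶ M) [QuasiIso s] (f : P ⟶ M) (a b : ℤ) (hab : a ≤ b)
    (hPvan : ∀ i : ℤ, i < a ∨ b < i → ∀ x : P.X i, x = 0)
    (hfree : ∀ i : ℤ, Module.Free R (P.X i)) :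
    ∃ (g : ∀ i : ℤ, P.X i ⟶ K.X i) (h : ∀ i : ℤ, P.X i ⟶ M.X (i - 1)),
      (∀ i : ℤ, C1 g i) ∧ (∀ i : ℤ, C2 s f g h i) := by
  obtain ⟨g, h, hg, hh⟩ := exists_chain_lift s f b (fun i hi => hPvan i (Or.inr hi)) hfree
    (b + 1 - a).toNat
  have hthr : b + 1 - ((b + 1 - a).toNat : ℤ) = a := by
    rw [Int.toNat_of_nonneg (by omega)]; ring
  refine ⟨g, h, fun i => ?_, fun i => ?_⟩
  · by_cases hia : a ≤ i
    · exact hg i (by omega)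
    · intro x
      rw [hPvan i (Or.inl (by omega)) x]
      simp
  · by_cases hia : a ≤ i
    · exact hh i (by omega)
    · intro x
      rw [hPvan i (Or.inl (by omega)) x]
      simp

/-- The chain map built from a family satisfying `C1`. -/
def mkHom (g : ∀ i : ℤ, P.X i ⟶ K.X i) (hg : ∀ i : ℤ, C1 g i) : P ⟶ K where
  f i := g i
  comm' := by
    intro i j hij
    have hij' : i + 1 = j := hij
    subst hij'
    apply ModuleCat.hom_ext
    apply LinearMap.ext
    intro x
    exact hg i x

/-- The homotopy `f ∼ mkHom g ≫ s` built from a family satisfying `C2`. -/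
noncomputable def mkHomotopy (s : K ⟶ M) (f : P ⟶ M) (g : ∀ i : ℤ, P.X i ⟶ K.X i)
    (hg : ∀ i : ℤ, C1 g i) (h : ∀ i : ℤ, P.X i ⟶ M.X (i - 1))
    (hh : ∀ i : ℤ, C2 s f g h i) : Homotopy f (mkHom g hg ≫ s) where
  hom i j := if hij : i - 1 = j then (h i : P.X i ⟶ M.X (i - 1)) ≫ (M.XIsoOfEq hij).hom else 0
  zero i j hnot := by
    rw [dif_neg]
    intro hij
    exact hnot (show j + 1 = i by omega)
  comm i := by
    rw [dNext_eq _ (show (ComplexShape.up ℤ).Rel i (i + 1) from rfl),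
      prevD_eq _ (show (ComplexShape.up ℤ).Rel (i - 1) i from by simp)]
    show f.f i =
      P.d i (i + 1) ≫ (if hij : (i + 1) - 1 = i then h (i + 1) ≫ (M.XIsoOfEq hij).hom else 0) +
      (if hij : i - 1 = i - 1 then h i ≫ (M.XIsoOfEq hij).hom else 0) ≫ M.d (i - 1) i +
      (mkHom g hg ≫ s).f i
    rw [dif_pos (add_sub_cancel_right i 1), dif_pos rfl]
    apply ModuleCat.hom_ext
    apply LinearMap.ext
    intro x
    have := hh i x
    rw [HomologicalComplex.XIsoOfEq_rfl, Iso.refl_hom, Category.comp_id]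
    show f.f i x = (M.XIsoOfEq (add_sub_cancel_right i 1)).hom (h (i + 1) (P.d i (i + 1) x)) +
      M.d (i - 1) i (h i x) + s.f i (g i x)
    rw [this]
    abel

lemma bij_of_qis (s : K ⟶ M) [QuasiIso s] (i : ℤ) :
    Function.Bijective (homologyMap s i) := by
  have : IsIso (homologyMap s i) := by
    rw [← quasiIsoAt_iff_isIso_homologyMap]; infer_instance
  exact ⟨(ModuleCat.mono_iff_injective _).1 inferInstance,
    (ModuleCat.epi_iff_surjective _).1 inferInstance⟩

end Assemble

section Transport

lemma transport_piIso (π : R) {A B C C' : ModuleCat R} (u : A ⟶ B) (e : B ⟶ C) (e' : B ⟶ C')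
    (he : Function.Bijective e) (he' : Function.Bijective e')
    (h : IsPiIsomorphism π (u ≫ e)) : IsPiIsomorphism π (u ≫ e') := by
  constructor
  · intro x hx
    have h0 : u x = 0 := he'.1 (show e' (u x) = e' 0 by rw [map_zero]; exact hx)
    exact h.1 x (show e (u x) = 0 by rw [h0, map_zero])
  · intro y
    obtain ⟨w, hw⟩ := he'.2 y
    obtain ⟨x, hx⟩ := h.2 (e w)
    have hw2 : π • w = u x := by
      apply he.1
      rw [map_smul]
      exact hx
    refine ⟨x, ?_⟩
    show π • y = e' (u x)
    rw [← hw2, ← hw, map_smul]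

lemma transport_piSurj (π : R) {A B C C' : ModuleCat R} (u : A ⟶ B) (e : B ⟶ C) (e' : B ⟶ C')
    (he : Function.Bijective e) (he' : Function.Bijective e')
    (h : IsPiSurjective π (u ≫ e)) : IsPiSurjective π (u ≫ e') := by
  intro y
  obtain ⟨w, hw⟩ := he'.2 y
  obtain ⟨x, hx⟩ := h (e w)
  have hw2 : π • w = u x := by
    apply he.1
    rw [map_smul]
    exact hx
  refine ⟨x, ?_⟩
  show π • y = e' (u x)
  rw [← hw2, ← hw, map_smul]

end Transport

end PropAux


universe u

/-- **Proposition 4.4.** There is an integer `l ≥ 0` depending only on `b - a` such that: for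
every commutative ring `R`, every `π ∈ R`, and all cochain complexes `M^•`, `N^•` of
`R`-modules vanishing in degrees `> b` which are isomorphic in the derived category `D(R)`
(equivalently, which are linked by a roof of quasi-isomorphisms `M^• ⟵ K^• ⟶ N^•`), if `M^•`
is `π`-`[a,b]`-pseudo-coherent then `N^•` is `π^l`-`[a,b]`-pseudo-coherent. -/
theorem isPiPseudoCoherent_of_derived_iso :
    ∃ l : ℤ → ℕ, ∀ (a b : ℤ), a ≤ b →
      ∀ (R : Type u) [CommRing R] (π : R) (M N : CochainComplex (ModuleCat R) ℤ),
        (∀ i : ℤ, b < i → ∀ x : M.X i, x = 0) →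
        (∀ i : ℤ, b < i → ∀ x : N.X i, x = 0) →
        (∃ (K : CochainComplex (ModuleCat R) ℤ) (s : K ⟶ M) (t : K ⟶ N),
          QuasiIso s ∧ QuasiIso t) →
        IsPiPseudoCoherent π a b M →
        IsPiPseudoCoherent (π ^ l (b - a)) a b N := by
  refine ⟨fun _ => 1, ?_⟩
  intro a b hab R _ π M N hMb hNb hroof hM
  obtain ⟨K, s, t, hs, ht⟩ := hroof
  obtain ⟨hMvan, P, f, hfree, hfin, hPvan, hiso, hsurj⟩ := hM
  obtain ⟨g, h, hC1, hC2⟩ := PropAux.exists_full_lift s f a b hab hPvan hfree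
  let G := PropAux.mkHom g hC1
  have hfeq : ∀ i : ℤ, HomologicalComplex.homologyMap f i =
      HomologicalComplex.homologyMap G i ≫ HomologicalComplex.homologyMap s i := by
    intro i
    rw [← HomologicalComplex.homologyMap_comp]
    exact (PropAux.mkHomotopy s f g hC1 h hC2).homologyMap_eq i
  show IsPiPseudoCoherent (π ^ 1) a b N
  rw [pow_one]
  refine ⟨hNb, P, G ≫ t, hfree, hfin, hPvan, ?_, ?_⟩
  · intro i hi
    have hMi := hiso i hi
    rw [hfeq i] at hMi
    rw [HomologicalComplex.homologyMap_comp]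
    exact PropAux.transport_piIso π _ _ _ (PropAux.bij_of_qis s i) (PropAux.bij_of_qis t i) hMi
  · have hMa := hsurj
    rw [hfeq a] at hMa
    rw [HomologicalComplex.homologyMap_comp]
    exact PropAux.transport_piSurj π _ _ _ (PropAux.bij_of_qis s a) (PropAux.bij_of_qis t a) hMa
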